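/- arXiv:1301.6788 — 5 statements merged into one kernel-verified Lean document; each statement's English description precedes it below -/
import Mathlib

section
/- Let η, θ, α be equivalence relations on a set X such that η ∘ θ = θ ∘ η and θ ≤ α ≤ η ∨ θ. Then α ∧ η permutes with θ, i.e., (α ∧ η) ∘ θ = θ ∘ (α ∧ η). -/
/-- If `η ∘ θ = θ ∘ η` and `θ ≤ α ≤ η ⊔ θ`, then `α ⊓ η` permutes with `θ`. -/
theorem inf_permutes (X : Type*) (η θ α : Setoid X)
    (hperm : Relation.Comp η.r θ.r = Relation.Comp θ.r η.r)
    (h1 : θ ≤ α) (h2 : α ≤ η ⊔ θ) :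
    Relation.Comp (α ⊓ η).r θ.r = Relation.Comp θ.r (α ⊓ η).r := by
  have key : ∀ x z, Relation.Comp (α ⊓ η).r θ.r x z →
      Relation.Comp θ.r (α ⊓ η).r x z := by
    rintro x z ⟨y, ⟨hαxy, hηxy⟩, hθyz⟩
    have h : Relation.Comp η.r θ.r x z := ⟨y, hηxy, hθyz⟩
    rw [hperm] at h
    obtain ⟨w, hθxw, hηwz⟩ := h
    exact ⟨w, hθxw, α.trans (α.symm (h1 hθxw)) (α.trans hαxy (h1 hθyz)), hηwz⟩
  funext x z
  apply propext
  constructor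
  · exact key x z
  · rintro ⟨y, hθxy, hαyz, hηyz⟩
    obtain ⟨w, hθzw, hαwx, hηwx⟩ := key z x ⟨y, ⟨α.symm hαyz, η.symm hηyz⟩, θ.symm hθxy⟩
    exact ⟨w, ⟨α.symm hαwx, η.symm hηwx⟩, θ.symm hθzw⟩
end

section
/- Let η, θ, α be equivalence relations on a set X such that η ∘ θ = θ ∘ η, η ∧ θ ≤ α ≤ η, and α ∘ θ = θ ∘ α. Then ((α ∘ θ) ∧ η) = α, i.e., (α ∨ θ) ∧ η = α. -/
/-- If `η ∘ θ = θ ∘ η`, `η ⊓ θ ≤ α ≤ η`, and `α` permutes with `θ`,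
then `(α ∘ θ) ⊓ η = α`, i.e. `(α ⊔ θ) ⊓ η = α`. -/
theorem comp_inf_eq (X : Type*) (η θ α : Setoid X)
    (hperm : Relation.Comp η.r θ.r = Relation.Comp θ.r η.r)
    (h1 : η ⊓ θ ≤ α) (h2 : α ≤ η)
    (haperm : Relation.Comp α.r θ.r = Relation.Comp θ.r α.r) :
    ((fun x y => Relation.Comp α.r θ.r x y ∧ η.r x y) = α.r) ∧
      (α ⊔ θ) ⊓ η = α := by
  -- key lemma
  have key : ∀ x y, Relation.Comp α.r θ.r x y → η.r x y → α.r x y := by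
    rintro x y ⟨z, hxz, hzy⟩ hxy
    have hzη : η.r z y := η.trans (η.symm (h2 hxz)) hxy
    have : (η ⊓ θ).r z y := ⟨hzη, hzy⟩
    exact α.trans hxz (h1 this)
  -- the composition is an equivalence relation
  let c : Setoid X := ⟨Relation.Comp α.r θ.r, by
    constructor
    · exact fun x => ⟨x, α.refl x, θ.refl x⟩
    · rintro x y ⟨z, hxz, hzy⟩
      have : Relation.Comp θ.r α.r y x := ⟨z, θ.symm hzy, α.symm hxz⟩
      rw [haperm]; exact this
    · rintro x y w ⟨a, hxa, hay⟩ ⟨b, hyb, hbw⟩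
      have h : Relation.Comp θ.r α.r a b := ⟨y, hay, hyb⟩
      rw [← haperm] at h
      obtain ⟨u, hau, hub⟩ := h
      exact ⟨u, α.trans hxa hau, θ.trans hub hbw⟩⟩
  have hαc : α ≤ c := fun x y h => ⟨y, h, θ.refl y⟩
  have hθc : θ ≤ c := fun x y h => ⟨x, α.refl x, h⟩
  have hsup : α ⊔ θ ≤ c := sup_le hαc hθc
  constructor
  · funext x y
    apply propext
    constructor
    · rintro ⟨h, hη⟩; exact key x y h hη
    · exact fun h => ⟨⟨y, h, θ.refl y⟩, h2 h⟩
  · apply le_antisymm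
    · rintro x y ⟨hs, hη⟩
      exact key x y (hsup hs) hη
    · exact le_inf (le_trans le_sup_left le_rfl) h2
end

section
/- Let η, θ, α, β be equivalence relations on a set X with η ∧ θ ≤ α ≤ η, η ∧ θ ≤ β ≤ η, α ∘ θ = θ ∘ α, and β ∘ θ = θ ∘ β. Then the join α ∨ β (in the lattice of equivalence relations) also permutes with θ: (α ∨ β) ∘ θ = θ ∘ (α ∨ β). -/
/-- If `η ⊓ θ ≤ α ≤ η`, `η ⊓ θ ≤ β ≤ η`, and both `α` and `β` permute
with `θ`, then the join `α ⊔ β` permutes with `θ`. -/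
theorem sup_permutes (X : Type*) (η θ α β : Setoid X)
    (ha1 : η ⊓ θ ≤ α) (ha2 : α ≤ η) (hb1 : η ⊓ θ ≤ β) (hb2 : β ≤ η)
    (haperm : Relation.Comp α.r θ.r = Relation.Comp θ.r α.r)
    (hbperm : Relation.Comp β.r θ.r = Relation.Comp θ.r β.r) :
    Relation.Comp (α ⊔ β).r θ.r = Relation.Comp θ.r (α ⊔ β).r := by
  have hα : α ≤ α ⊔ β := le_sup_left
  have hβ : β ≤ α ⊔ β := le_sup_right
  have key : ∀ x y : X, (α ⊔ β).r x y →
      (∀ z, θ.r y z → ∃ w, θ.r x w ∧ (α ⊔ β).r w z) ∧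
      (∀ z, θ.r x z → ∃ w, θ.r y w ∧ (α ⊔ β).r w z) := by
    intro x y hxy
    have hxy' : Relation.EqvGen (fun a b => α.r a b ∨ β.r a b) x y := by
      rw [Setoid.sup_eq_eqvGen] at hxy; exact hxy
    clear hxy
    induction hxy' with
    | rel a b h =>
      constructor
      · intro z hz
        rcases h with h | h
        · have : Relation.Comp θ.r α.r a z := by
            rw [← haperm]; exact ⟨b, h, hz⟩
          rcases this with ⟨w, hw1, hw2⟩
          exact ⟨w, hw1, hα hw2⟩
        · have : Relation.Comp θ.r β.r a z := by
            rw [← hbperm]; exact ⟨b, h, hz⟩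
          rcases this with ⟨w, hw1, hw2⟩
          exact ⟨w, hw1, hβ hw2⟩
      · intro z hz
        rcases h with h | h
        · have : Relation.Comp θ.r α.r b z := by
            rw [← haperm]; exact ⟨a, α.symm' h, hz⟩
          rcases this with ⟨w, hw1, hw2⟩
          exact ⟨w, hw1, hα hw2⟩
        · have : Relation.Comp θ.r β.r b z := by
            rw [← hbperm]; exact ⟨a, β.symm' h, hz⟩
          rcases this with ⟨w, hw1, hw2⟩
          exact ⟨w, hw1, hβ hw2⟩
    | refl a =>
      exact ⟨fun z hz => ⟨z, hz, (α ⊔ β).refl' z⟩,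
             fun z hz => ⟨z, hz, (α ⊔ β).refl' z⟩⟩
    | symm a b _ ih => exact ⟨ih.2, ih.1⟩
    | trans a b c _ _ ih1 ih2 =>
      constructor
      · intro z hz
        rcases ih2.1 z hz with ⟨u, hu1, hu2⟩
        rcases ih1.1 u hu1 with ⟨v, hv1, hv2⟩
        exact ⟨v, hv1, (α ⊔ β).trans' hv2 hu2⟩
      · intro z hz
        rcases ih1.2 z hz with ⟨u, hu1, hu2⟩
        rcases ih2.2 u hu1 with ⟨v, hv1, hv2⟩
        exact ⟨v, hv1, (α ⊔ β).trans' hv2 hu2⟩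
  funext x z
  apply propext
  constructor
  · rintro ⟨y, hxy, hyz⟩
    rcases (key x y hxy).1 z hyz with ⟨w, hw1, hw2⟩
    exact ⟨w, hw1, hw2⟩
  · rintro ⟨y, hxy, hyz⟩
    rcases (key y z hyz).2 x (θ.symm' hxy) with ⟨w, hw1, hw2⟩
    exact ⟨w, (α ⊔ β).symm' hw2, θ.symm' hw1⟩
end

section
/- Let η, θ, α, β be equivalence relations on a set X with η ∧ θ ≤ α ≤ η, η ∧ θ ≤ β ≤ η, α ∘ θ = θ ∘ α, and β ∘ θ = θ ∘ β. Then the meet α ∧ β (intersection) also permutes with θ: (α ∧ β) ∘ θ = θ ∘ (α ∧ β). -/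
private lemma inf_permutes_aux (X : Type*) (η θ α β : Setoid X)
    (ha2 : α ≤ η) (hb1 : η ⊓ θ ≤ β) (hb2 : β ≤ η)
    (haperm : Relation.Comp α.r θ.r = Relation.Comp θ.r α.r)
    (hbperm : Relation.Comp β.r θ.r = Relation.Comp θ.r β.r)
    {x z : X} (h : Relation.Comp (α ⊓ β).r θ.r x z) :
    Relation.Comp θ.r (α ⊓ β).r x z := by
  obtain ⟨y, ⟨hxa, hxb⟩, hyz⟩ := h
  obtain ⟨u, hxu, huz⟩ : Relation.Comp θ.r α.r x z := by
    rw [← haperm]; exact ⟨y, hxa, hyz⟩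
  obtain ⟨v, hxv, hvz⟩ : Relation.Comp θ.r β.r x z := by
    rw [← hbperm]; exact ⟨y, hxb, hyz⟩
  have huv : θ.r u v := θ.trans (θ.symm hxu) hxv
  have huvη : η.r u v := η.trans (ha2 huz) (η.symm (hb2 hvz))
  have hub : β.r u z := β.trans (hb1 ⟨huvη, huv⟩) hvz
  exact ⟨u, hxu, huz, hub⟩

/-- If `η ⊓ θ ≤ α ≤ η`, `η ⊓ θ ≤ β ≤ η`, and both `α` and `β` permute
with `θ`, then the meet `α ⊓ β` permutes with `θ`. -/
theorem inf_permutes' (X : Type*) (η θ α β : Setoid X)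
    (ha1 : η ⊓ θ ≤ α) (ha2 : α ≤ η) (hb1 : η ⊓ θ ≤ β) (hb2 : β ≤ η)
    (haperm : Relation.Comp α.r θ.r = Relation.Comp θ.r α.r)
    (hbperm : Relation.Comp β.r θ.r = Relation.Comp θ.r β.r) :
    Relation.Comp (α ⊓ β).r θ.r = Relation.Comp θ.r (α ⊓ β).r := by
  ext x z
  constructor
  · exact inf_permutes_aux X η θ α β ha2 hb1 hb2 haperm hbperm
  · rintro ⟨y, hxy, hya, hyb⟩
    obtain ⟨w, hzw, hwa, hwb⟩ :=
      inf_permutes_aux X η θ β α hb2 ha1 ha2 hbperm haperm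
        (x := z) (z := x) ⟨y, ⟨β.symm hyb, α.symm hya⟩, θ.symm hxy⟩
    exact ⟨w, ⟨α.symm hwb, β.symm hwa⟩, θ.symm hzw⟩
end

section
/- Let L be a sublattice of the lattice Eq(X) of equivalence relations on a set X, and let η, θ ∈ L with η ∘ θ = θ ∘ η. Then the interval [θ, η ∨ θ] ∩ L is lattice-isomorphic to the set [η ∧ θ, η]_L^θ := {γ ∈ L : η ∧ θ ≤ γ ≤ η, γ ∘ θ = θ ∘ γ}, and moreover [η ∧ θ, η]_L^θ is a sublattice of the interval [η ∧ θ, η] ∩ L (closed under the meet and join of L). -/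
section Aux

variable {X : Type*}

private lemma comp_iff {r s : Setoid X} {x z : X} :
    Relation.Comp r.r s.r x z ↔ ∃ y, r.r x y ∧ s.r y z := Iff.rfl

private lemma perm_pt {r s : Setoid X}
    (h : Relation.Comp r.r s.r = Relation.Comp s.r r.r) (x z : X) :
    (∃ y, r.r x y ∧ s.r y z) ↔ ∃ y, s.r x y ∧ r.r y z :=
  iff_of_eq (congrFun (congrFun h x) z)

/-- If `γ` and `θ` permute then the relation of `γ ⊔ θ` is `γ ∘ θ`. -/
private lemma rel_sup_of_perm {γ θ : Setoid X}
    (h : Relation.Comp γ.r θ.r = Relation.Comp θ.r γ.r) (x z : X) :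
    (γ ⊔ θ).r x z ↔ ∃ y, γ.r x y ∧ θ.r y z := by
  have hδ : Equivalence (fun a c => ∃ b, γ.r a b ∧ θ.r b c) := by
    constructor
    · exact fun a => ⟨a, γ.refl' a, θ.refl' a⟩
    · rintro a c ⟨b, hab, hbc⟩
      have : ∃ y, θ.r c y ∧ γ.r y a := ⟨b, θ.symm' hbc, γ.symm' hab⟩
      exact (perm_pt h c a).mpr this
    · rintro a c e ⟨b, hab, hbc⟩ ⟨d, hcd, hde⟩
      obtain ⟨m, hbm, hmd⟩ := (perm_pt h b d).mpr ⟨c, hbc, hcd⟩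
      exact ⟨m, γ.trans' hab hbm, θ.trans' hmd hde⟩
  let δ : Setoid X := ⟨fun a c => ∃ b, γ.r a b ∧ θ.r b c, hδ⟩
  have hle : γ ⊔ θ ≤ δ := by
    apply sup_le
    · exact fun a b hab => ⟨b, hab, θ.refl' b⟩
    · exact fun a b hab => ⟨a, γ.refl' a, hab⟩
  have hge : δ ≤ γ ⊔ θ := by
    rintro a c ⟨b, hab, hbc⟩
    exact (γ ⊔ θ).trans' (le_sup_left (a := γ) (b := θ) hab)
      (le_sup_right (a := γ) (b := θ) hbc)
  have : γ ⊔ θ = δ := le_antisymm hle hge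
  rw [this]
  exact Iff.rfl

/-- For symmetric-reflexive generators, `EqvGen` implies `ReflTransGen`. -/
private lemma eqvGen_to_rtg {r : X → X → Prop} (hsymm : Symmetric r)
    {x y : X} (h : Relation.EqvGen r x y) : Relation.ReflTransGen r x y := by
  induction h with
  | rel a b hab => exact Relation.ReflTransGen.single hab
  | refl a => exact Relation.ReflTransGen.refl
  | symm a b _ ih => haveI : Std.Symm r := ⟨fun _ _ h => hsymm h⟩; exact Std.Symm.symm _ _ ih
  | trans a b c _ _ ih₁ ih₂ => exact ih₁.trans ih₂

/-- Key step: pushing `θ` through a reflexive-transitive chain of `α ∪ β` steps. -/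
private lemma push_theta {α β θ : Setoid X}
    (hα : Relation.Comp α.r θ.r = Relation.Comp θ.r α.r)
    (hβ : Relation.Comp β.r θ.r = Relation.Comp θ.r β.r)
    {x y : X} (h : Relation.ReflTransGen (fun a b => α.r a b ∨ β.r a b) x y) :
    ∀ z, θ.r y z → ∃ w, θ.r x w ∧ (α ⊔ β).r w z := by
  induction h using Relation.ReflTransGen.head_induction_on with
  | refl => exact fun z hz => ⟨z, hz, (α ⊔ β).refl' z⟩
  | head hab _ ih =>
    rename_i a b _
    intro z hz
    obtain ⟨w, hbw, hwz⟩ := ih z hz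
    rcases hab with hab | hab
    · obtain ⟨v, hav, hvw⟩ := (perm_pt hα a w).mp ⟨b, hab, hbw⟩
      exact ⟨v, hav, (α ⊔ β).trans' (le_sup_left (a := α) (b := β) hvw) hwz⟩
    · obtain ⟨v, hav, hvw⟩ := (perm_pt hβ a w).mp ⟨b, hab, hbw⟩
      exact ⟨v, hav, (α ⊔ β).trans' (le_sup_right (a := α) (b := β) hvw) hwz⟩

/-- The join of two relations permuting with `θ` permutes with `θ`. -/
private lemma perm_sup {α β θ : Setoid X}
    (hα : Relation.Comp α.r θ.r = Relation.Comp θ.r α.r)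
    (hβ : Relation.Comp β.r θ.r = Relation.Comp θ.r β.r) :
    Relation.Comp (α ⊔ β).r θ.r = Relation.Comp θ.r (α ⊔ β).r := by
  have key : ∀ x z : X, (∃ y, (α ⊔ β).r x y ∧ θ.r y z) →
      ∃ y, θ.r x y ∧ (α ⊔ β).r y z := by
    rintro x z ⟨y, hxy, hyz⟩
    have hsymm : Symmetric (fun a b => α.r a b ∨ β.r a b) := by
      rintro a b (h | h)
      · exact Or.inl (α.symm' h)
      · exact Or.inr (β.symm' h)
    have hchain : Relation.ReflTransGen (fun a b => α.r a b ∨ β.r a b) x y := by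
      have : (α ⊔ β) = Relation.EqvGen.setoid (fun a b => α.r a b ∨ β.r a b) :=
        Setoid.sup_eq_eqvGen α β
      rw [this] at hxy
      exact eqvGen_to_rtg hsymm hxy
    exact push_theta hα hβ hchain z hyz
  funext x z
  ext
  constructor
  · exact key x z
  · rintro ⟨y, hxy, hyz⟩
    obtain ⟨w, hzw, hwx⟩ := key z x ⟨y, (α ⊔ β).symm' hyz, θ.symm' hxy⟩
    exact ⟨w, (α ⊔ β).symm' hwx, θ.symm' hzw⟩

end Aux

/-- Dedekind transposition for a sublattice `L` of `Eq(X)`: if `η, θ ∈ L`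
permute, then `[θ, η ⊔ θ]_L` is order (hence lattice) isomorphic to
`[η ⊓ θ, η]_L^θ`, the set of members of `L` between `η ⊓ θ` and `η` that
permute with `θ`, via `α ↦ α ⊓ η` with inverse `γ ↦ γ ∘ θ = γ ⊔ θ`; moreover
`[η ⊓ θ, η]_L^θ` is closed under the meet and join, i.e. it is a sublattice
of `[η ⊓ θ, η]_L`. -/
theorem transposition_sublattice (X : Type*) (L : Sublattice (Setoid X))
    (η θ : Setoid X) (hη : η ∈ L) (hθ : θ ∈ L)
    (hperm : Relation.Comp η.r θ.r = Relation.Comp θ.r η.r) :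
    (∃ e : {α : Setoid X | α ∈ L ∧ θ ≤ α ∧ α ≤ η ⊔ θ} ≃o
           {γ : Setoid X | γ ∈ L ∧ η ⊓ θ ≤ γ ∧ γ ≤ η ∧
             Relation.Comp γ.r θ.r = Relation.Comp θ.r γ.r},
       (∀ a, (e a : Setoid X) = (a : Setoid X) ⊓ η) ∧
       (∀ b, (e.symm b : Setoid X) = (b : Setoid X) ⊔ θ)) ∧
    (∀ α β : Setoid X,
      α ∈ L → η ⊓ θ ≤ α → α ≤ η →
        Relation.Comp α.r θ.r = Relation.Comp θ.r α.r →
      β ∈ L → η ⊓ θ ≤ β → β ≤ η →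
        Relation.Comp β.r θ.r = Relation.Comp θ.r β.r →
      ((α ⊔ β ∈ L ∧ η ⊓ θ ≤ α ⊔ β ∧ α ⊔ β ≤ η ∧
          Relation.Comp (α ⊔ β).r θ.r = Relation.Comp θ.r (α ⊔ β).r) ∧
       (α ⊓ β ∈ L ∧ η ⊓ θ ≤ α ⊓ β ∧ α ⊓ β ≤ η ∧
          Relation.Comp (α ⊓ β).r θ.r = Relation.Comp θ.r (α ⊓ β).r))) := by
  -- the permutation of `α ⊓ η` with `θ`, for `θ ≤ α ≤ η ⊔ θ`
  have perm_inf_eta : ∀ α : Setoid X, θ ≤ α → α ≤ η ⊔ θ →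
      Relation.Comp (α ⊓ η).r θ.r = Relation.Comp θ.r (α ⊓ η).r := by
    intro α hθα hαsup
    have h1 : ∀ x z : X, Relation.Comp (α ⊓ η).r θ.r x z ↔
        α.r x z ∧ ∃ y, η.r x y ∧ θ.r y z := by
      intro x z
      constructor
      · rintro ⟨y, ⟨hxyα, hxyη⟩, hyz⟩
        exact ⟨α.trans' hxyα (hθα hyz), y, hxyη, hyz⟩
      · rintro ⟨hxz, y, hxyη, hyz⟩
        have hyα : α.r y z := hθα hyz
        exact ⟨y, ⟨α.trans' hxz (α.symm' hyα), hxyη⟩, hyz⟩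
    have h2 : ∀ x z : X, Relation.Comp θ.r (α ⊓ η).r x z ↔
        α.r x z ∧ ∃ y, θ.r x y ∧ η.r y z := by
      intro x z
      constructor
      · rintro ⟨y, hxy, ⟨hyzα, hyzη⟩⟩
        exact ⟨α.trans' (hθα hxy) hyzα, y, hxy, hyzη⟩
      · rintro ⟨hxz, y, hxy, hyzη⟩
        have hxyα : α.r x y := hθα hxy
        exact ⟨y, hxy, ⟨α.trans' (α.symm' hxyα) hxz, hyzη⟩⟩
    funext x z
    ext
    rw [h1 x z, h2 x z, and_congr_right_iff]
    intro _
    exact perm_pt hperm x z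
  -- (γ ⊔ θ) ⊓ η = γ, for γ in the target set
  have inv_right : ∀ γ : Setoid X, η ⊓ θ ≤ γ → γ ≤ η →
      Relation.Comp γ.r θ.r = Relation.Comp θ.r γ.r → (γ ⊔ θ) ⊓ η = γ := by
    intro γ hlo hhi hp
    apply le_antisymm
    · rintro x z ⟨hsup, hη⟩
      obtain ⟨y, hxy, hyz⟩ := (rel_sup_of_perm hp x z).mp hsup
      have hxyη : η.r x y := hhi hxy
      have hyzη : η.r y z := η.trans' (η.symm' hxyη) hη
      have : γ.r y z := hlo ⟨hyzη, hyz⟩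
      exact γ.trans' hxy this
    · exact le_inf le_sup_left hhi
  -- (α ⊓ η) ⊔ θ = α, for α in the source set
  have inv_left : ∀ α : Setoid X, θ ≤ α → α ≤ η ⊔ θ → (α ⊓ η) ⊔ θ = α := by
    intro α hθα hαsup
    have hp := perm_inf_eta α hθα hαsup
    apply Setoid.ext
    intro x z
    rw [show ((α ⊓ η) ⊔ θ).r x z ↔ _ from rel_sup_of_perm hp x z]
    constructor
    · rintro ⟨y, ⟨hxyα, _⟩, hyz⟩
      exact α.trans' hxyα (hθα hyz)
    · intro hxz
      have hsup : (η ⊔ θ).r x z := hαsup hxz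
      obtain ⟨y, hxyη, hyz⟩ := (rel_sup_of_perm hperm x z).mp hsup
      have hyzα : α.r y z := hθα hyz
      exact ⟨y, ⟨α.trans' hxz (α.symm' hyzα), hxyη⟩, hyz⟩
  refine ⟨?_, ?_⟩
  · -- the order isomorphism
    have toFun_mem : ∀ a : {α : Setoid X | α ∈ L ∧ θ ≤ α ∧ α ≤ η ⊔ θ},
        (a : Setoid X) ⊓ η ∈ {γ : Setoid X | γ ∈ L ∧ η ⊓ θ ≤ γ ∧ γ ≤ η ∧
          Relation.Comp γ.r θ.r = Relation.Comp θ.r γ.r} := by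
      rintro ⟨α, hαL, hθα, hαsup⟩
      exact ⟨L.infClosed hαL hη, le_inf (le_trans inf_le_right hθα) inf_le_left,
        inf_le_right, perm_inf_eta α hθα hαsup⟩
    have invFun_mem : ∀ b : {γ : Setoid X | γ ∈ L ∧ η ⊓ θ ≤ γ ∧ γ ≤ η ∧
          Relation.Comp γ.r θ.r = Relation.Comp θ.r γ.r},
        (b : Setoid X) ⊔ θ ∈ {α : Setoid X | α ∈ L ∧ θ ≤ α ∧ α ≤ η ⊔ θ} := by
      rintro ⟨γ, hγL, hlo, hhi, hp⟩
      exact ⟨L.supClosed hγL hθ, le_sup_right, sup_le (le_trans hhi le_sup_left) le_sup_right⟩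
    refine ⟨{ toFun := fun a => ⟨(a : Setoid X) ⊓ η, toFun_mem a⟩
              invFun := fun b => ⟨(b : Setoid X) ⊔ θ, invFun_mem b⟩
              left_inv := ?_
              right_inv := ?_
              map_rel_iff' := ?_ }, fun a => rfl, fun b => rfl⟩
    · rintro ⟨α, hαL, hθα, hαsup⟩
      exact Subtype.ext (inv_left α hθα hαsup)
    · rintro ⟨γ, hγL, hlo, hhi, hp⟩
      exact Subtype.ext (inv_right γ hlo hhi hp)
    · rintro ⟨α, hαL, hθα, hαsup⟩ ⟨β, hβL, hθβ, hβsup⟩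
      simp only [Equiv.coe_fn_mk, Subtype.mk_le_mk, Subtype.coe_le_coe]
      constructor
      · intro h
        calc α = (α ⊓ η) ⊔ θ := (inv_left α hθα hαsup).symm
          _ ≤ (β ⊓ η) ⊔ θ := sup_le_sup_right h θ
          _ = β := inv_left β hθβ hβsup
      · intro h
        exact inf_le_inf_right η h
  · -- closure under join and meet
    intro α β hαL hαlo hαhi hαp hβL hβlo hβhi hβp
    constructor
    · refine ⟨L.supClosed hαL hβL, le_trans hαlo le_sup_left,
        sup_le hαhi hβhi, perm_sup hαp hβp⟩
    · refine ⟨L.infClosed hαL hβL, le_inf hαlo hβlo,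
        le_trans inf_le_left hαhi, ?_⟩
      funext x z
      ext
      constructor
      · rintro ⟨y, ⟨hxyα, hxyβ⟩, hyz⟩
        obtain ⟨y₁, hxy₁, hy₁z⟩ := (perm_pt hαp x z).mp ⟨y, hxyα, hyz⟩
        obtain ⟨y₂, hxy₂, hy₂z⟩ := (perm_pt hβp x z).mp ⟨y, hxyβ, hyz⟩
        have hθ12 : θ.r y₁ y₂ := θ.trans' (θ.symm' hxy₁) hxy₂
        have hη12 : η.r y₁ y₂ := η.trans' (hαhi hy₁z) (η.symm' (hβhi hy₂z))
        have h12 : β.r y₁ y₂ := hβlo ⟨hη12, hθ12⟩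
        exact ⟨y₁, hxy₁, hy₁z, β.trans' h12 hy₂z⟩
      · rintro ⟨y, hxy, ⟨hyzα, hyzβ⟩⟩
        obtain ⟨y₁, hxy₁, hy₁z⟩ := (perm_pt hαp x z).mpr ⟨y, hxy, hyzα⟩
        obtain ⟨y₂, hxy₂, hy₂z⟩ := (perm_pt hβp x z).mpr ⟨y, hxy, hyzβ⟩
        have hθ12 : θ.r y₁ y₂ := θ.trans' hy₁z (θ.symm' hy₂z)
        have hη12 : η.r y₁ y₂ := η.trans' (η.symm' (hαhi hxy₁)) (hβhi hxy₂)
        have h12 : β.r y₁ y₂ := hβlo ⟨hη12, hθ12⟩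
        exact ⟨y₁, ⟨hxy₁, β.trans' hxy₂ (β.symm' h12)⟩, hy₁z⟩
end
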